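/- Let d ≥ 1 and let a ∈ ℝ^d have all coordinates strictly positive. Then the diagonal tropical Hopf manifold S = (𝕋^d ∖ {∞})/ℤ, the quotient by the ℤ-action n·x = x + n·a, is homeomorphic to S¹ × D^{d−1}, the product of the circle with the closed (d−1)-dimensional Euclidean ball. (This homeomorphism is asserted and used in the paper's computation of the (p,q)-homology of diagonal tropical Hopf manifolds.) -/

import Mathlib

/-- The tropical affine space `𝕋 = ℝ ∪ {∞}` is `WithTop ℝ`, with the order topology. -/
noncomputable instance : TopologicalSpace (WithTop ℝ) := Preorder.topology _
instance : OrderTopology (WithTop ℝ) := ⟨rfl⟩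

namespace HopfAux
noncomputable section
open Set Filter Topology

abbrev TT := WithTop ℝ

/-! ### Part 1: topology of `WithTop ℝ` -/

def coeIso : ℝ ≃o Iio (⊤ : TT) where
  toFun r := ⟨(r : TT), Set.mem_Iio.2 (WithTop.coe_lt_top r)⟩
  invFun x := x.1.untop (Set.mem_Iio.1 x.2).ne
  left_inv r := by simp
  right_inv x := by ext; simp
  map_rel_iff' := by intro a b; exact WithTop.coe_le_coe

lemma continuous_coe : Continuous ((↑) : ℝ → TT) :=
  continuous_subtype_val.comp coeIso.toHomeomorph.continuous

lemma continuousOn_untop' : ContinuousOn (WithTop.untopD 0) (Iio (⊤ : TT)) := by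
  rw [continuousOn_iff_continuous_restrict]
  have h : (Iio (⊤:TT)).domRestrict (WithTop.untopD 0) = coeIso.symm := by
    funext x
    lift (x : TT) to ℝ using x.2.ne with r hr
    have hx : coeIso r = x := Subtype.ext hr
    rw [← hx, OrderIso.symm_apply_apply]
    exact WithTop.untopD_coe 0 r
  rw [h]
  exact coeIso.toHomeomorph.symm.continuous

lemma continuous_untop'_comp {α : Type*} [TopologicalSpace α] {f : α → TT}
    (hf : Continuous f) (h : ∀ x, f x ≠ ⊤) :
    Continuous (fun x => (f x).untopD 0) :=
  continuousOn_untop'.comp_continuous hf (fun x => lt_top_iff_ne_top.2 (h x))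

/-- the function N t = exp (-t), N ⊤ = 0 -/
def NN : TT → ℝ := fun t => (WithTop.map (fun s : ℝ => Real.exp (-s)) t).untopD 0

@[simp] lemma NN_coe (s : ℝ) : NN (s : TT) = Real.exp (-s) := rfl
@[simp] lemma NN_top : NN ⊤ = 0 := rfl

lemma NN_nonneg (t : TT) : 0 ≤ NN t := by
  induction t using WithTop.recTopCoe with
  | top => simp
  | coe s => simp [Real.exp_nonneg]

lemma NN_strictAnti : StrictAnti NN := by
  intro s t hst
  induction t using WithTop.recTopCoe with
  | top =>
    lift s to ℝ using hst.ne with r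
    simpa using Real.exp_pos (-r)
  | coe t' =>
    lift s to ℝ using hst.ne_top with r
    simp only [NN_coe]
    exact Real.exp_lt_exp.2 (by simpa using WithTop.coe_lt_coe.1 hst)

lemma NN_inj : Function.Injective NN := NN_strictAnti.injective

lemma continuousOn_NN : ContinuousOn NN (Iio (⊤ : TT)) := by
  have : ContinuousOn (fun t : TT => Real.exp (-(WithTop.untopD 0 t))) (Iio ⊤) :=
    (Real.continuous_exp.comp continuous_neg).comp_continuousOn continuousOn_untop'
  refine this.congr fun t ht => ?_
  lift t to ℝ using ht.ne
  simp

lemma continuous_NN : Continuous NN := by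
  rw [continuous_iff_continuousAt]
  intro t
  induction t using WithTop.recTopCoe with
  | top =>
    rw [ContinuousAt, NN_top, Metric.tendsto_nhds]
    intro ε hε
    have hmem : Ioi ((-Real.log ε : ℝ) : TT) ∈ 𝓝 (⊤ : TT) :=
      Ioi_mem_nhds (WithTop.coe_lt_top _)
    filter_upwards [hmem] with t ht
    rw [Real.dist_eq]
    induction t using WithTop.recTopCoe with
    | top => simpa using hε
    | coe s =>
      have hs : -Real.log ε < s := WithTop.coe_lt_coe.1 (mem_Ioi.1 ht)
      rw [NN_coe, sub_zero, abs_of_nonneg (Real.exp_nonneg _)]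
      calc Real.exp (-s) < Real.exp (Real.log ε) := Real.exp_lt_exp.2 (by linarith)
        _ = ε := Real.exp_log hε
  | coe s =>
    exact continuousOn_NN.continuousAt (Iio_mem_nhds (WithTop.coe_lt_top s))

/-- inverse of NN -/
def NNinv : ℝ → TT := fun s => if s ≤ 0 then ⊤ else ((-Real.log s : ℝ) : TT)

lemma NNinv_zero : NNinv 0 = ⊤ := if_pos le_rfl

lemma NNinv_exp (u : ℝ) : NNinv (Real.exp (-u)) = (u : TT) := by
  rw [NNinv, if_neg (not_le.2 (Real.exp_pos _)), Real.log_exp, neg_neg]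

lemma NN_NNinv {s : ℝ} (hs : 0 ≤ s) : NN (NNinv s) = s := by
  rcases le_or_gt s 0 with h | h
  · have : s = 0 := le_antisymm h hs
    simp [NNinv, this]
  · rw [NNinv, if_neg (not_le.2 h), NN_coe, neg_neg, Real.exp_log h]

lemma continuous_NNinv : Continuous NNinv := by
  rw [continuous_iff_continuousAt]
  intro s
  rcases lt_or_ge 0 s with h | h
  · have hev : ∀ᶠ u in 𝓝 s, NNinv u = ((-Real.log u : ℝ) : TT) := by
      filter_upwards [eventually_gt_nhds h] with u hu
      simp [NNinv, not_le.2 hu]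
    exact (continuous_coe.continuousAt.comp ((Real.continuousAt_log h.ne').neg)).congr
      (hev.mono fun u hu => hu.symm)
  · rw [ContinuousAt]
    have : NNinv s = ⊤ := by simp [NNinv, h]
    rw [this, nhds_top_order]
    simp only [Filter.tendsto_iInf, Filter.tendsto_principal]
    intro l hl
    lift l to ℝ using hl.ne with b
    have hmem : Iio (Real.exp (-(b+1))) ∈ 𝓝 s :=
      Iio_mem_nhds (lt_of_le_of_lt h (Real.exp_pos _))
    filter_upwards [hmem] with u hu
    rcases le_or_gt u 0 with h' | h'
    · simp [NNinv, h', hl]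
    · have heq : NNinv u = ((-Real.log u : ℝ) : TT) := if_neg (not_le.2 h')
      rw [heq, mem_Ioi]
      have hlog : Real.log u < -(b+1) := by
        calc Real.log u < Real.log (Real.exp (-(b+1))) := Real.log_lt_log h' hu
          _ = -(b+1) := Real.log_exp _
      exact WithTop.coe_lt_coe.2 (by linarith)

lemma isCompact_Icc_top : IsCompact (Icc (0:TT) ⊤) := by
  have hsub : Icc (0:TT) ⊤ ⊆ NNinv '' (Icc (0:ℝ) 1) := by
    rintro t ⟨ht0, -⟩
    induction t using WithTop.recTopCoe with
    | top => exact ⟨0, ⟨le_rfl, zero_le_one⟩, NNinv_zero⟩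
    | coe u =>
      have hu : 0 ≤ u := by exact_mod_cast ht0
      refine ⟨Real.exp (-u), ⟨(Real.exp_pos _).le, ?_⟩, NNinv_exp u⟩
      rw [← Real.exp_zero]
      exact Real.exp_le_exp.2 (by linarith)
  exact IsCompact.of_isClosed_subset (isCompact_Icc.image continuous_NNinv) isClosed_Icc hsub

lemma continuous_inf' {ι X α : Type*} [TopologicalSpace X] [TopologicalSpace α] [LinearOrder α]
    [OrderClosedTopology α] {s : Finset ι} (hs : s.Nonempty) {f : ι → X → α}
    (hf : ∀ i, Continuous (f i)) : Continuous (fun x => s.inf' hs (fun i => f i x)) := by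
  induction hs using Finset.Nonempty.cons_induction with
  | singleton i => simpa using hf i
  | cons i s hi hs ih =>
    exact ((hf i).min ih).congr fun x =>
      (Finset.inf'_cons (H := hs) (f := fun j => f j x) (hb := hi)).symm

lemma continuous_sup' {ι X α : Type*} [TopologicalSpace X] [TopologicalSpace α] [LinearOrder α]
    [OrderClosedTopology α] {s : Finset ι} (hs : s.Nonempty) {f : ι → X → α}
    (hf : ∀ i, Continuous (f i)) : Continuous (fun x => s.sup' hs (fun i => f i x)) := by
  induction hs using Finset.Nonempty.cons_induction with
  | singleton i => simpa using hf i
  | cons i s hi hs ih =>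
    exact ((hf i).max ih).congr fun x =>
      (Finset.sup'_cons (H := hs) (f := fun j => f j x) (hb := hi)).symm

/-! ### Part 2: the scaling isomorphisms and the maps m, w -/

variable {e : ℕ} {a : Fin (e+1) → ℝ}

def gIso (ha : ∀ k, 0 < a k) (k : Fin (e+1)) : TT ≃o TT :=
  (OrderIso.mulRight₀ (a k)⁻¹ (inv_pos.2 (ha k))).withTopCongr

variable (ha : ∀ k, 0 < a k)

@[simp] lemma gIso_coe (k) (u : ℝ) : gIso ha k (u : TT) = ((u * (a k)⁻¹ : ℝ) : TT) := rfl

@[simp] lemma gIso_top (k) : gIso ha k ⊤ = ⊤ := rfl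

@[simp] lemma gIso_symm_coe (k) (v : ℝ) : (gIso ha k).symm (v : TT) = ((v * a k : ℝ) : TT) := by
  have : (gIso ha k) ((v * a k : ℝ) : TT) = (v : TT) := by
    rw [gIso_coe]
    congr 1
    exact mul_div_cancel_right₀ v (ha k).ne'
  rw [← this, OrderIso.symm_apply_apply]

@[simp] lemma gIso_symm_top (k) : (gIso ha k).symm ⊤ = ⊤ := by
  have h : gIso ha k ((gIso ha k).symm ⊤) = gIso ha k ⊤ := by
    rw [OrderIso.apply_symm_apply, gIso_top]
  exact (gIso ha k).injective h

@[simp] lemma gIso_zero (k) : gIso ha k 0 = 0 := by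
  rw [show (0:TT) = ((0:ℝ):TT) from rfl, gIso_coe]
  simp

lemma gIso_eq_top_iff (k) {t : TT} : gIso ha k t = ⊤ ↔ t = ⊤ := by
  constructor
  · intro h
    by_contra ht
    lift t to ℝ using ht
    rw [gIso_coe] at h
    exact (WithTop.coe_ne_top h)
  · rintro rfl; simp

def addC (c : ℝ) : TT ≃o TT := (OrderIso.addRight c).withTopCongr

lemma addC_eq (c : ℝ) (t : TT) : addC c t = t + (c : TT) := by
  induction t using WithTop.recTopCoe with
  | top => rfl
  | coe u => rfl

lemma gIso_shift (k) (t : TT) (c : ℝ) :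
    gIso ha k (t + ((c * a k : ℝ) : TT)) = gIso ha k t + (c : TT) := by
  induction t using WithTop.recTopCoe with
  | top => simp
  | coe u =>
    rw [← WithTop.coe_add, gIso_coe, gIso_coe, ← WithTop.coe_add]
    congr 1
    rw [add_mul, mul_inv_cancel_right₀ (ha k).ne']

def MM (x : Fin (e+1) → TT) : TT :=
  Finset.univ.inf' Finset.univ_nonempty (fun k => gIso ha k (x k))

def mm (x : Fin (e+1) → TT) : ℝ := (MM ha x).untopD 0

lemma MM_le (x) (k) : MM ha x ≤ gIso ha k (x k) :=
  Finset.inf'_le _ (Finset.mem_univ k)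

lemma exists_MM_eq (x) : ∃ k, MM ha x = gIso ha k (x k) := by
  obtain ⟨k, _, hk⟩ := Finset.exists_mem_eq_inf' (Finset.univ_nonempty) (fun k => gIso ha k (x k))
  exact ⟨k, hk⟩

lemma MM_ne_top {x} (hx : ∃ k, x k ≠ ⊤) : MM ha x ≠ ⊤ := by
  obtain ⟨k, hk⟩ := hx
  refine ne_top_of_le_ne_top ?_ (MM_le ha x k)
  rw [Ne, gIso_eq_top_iff]
  exact hk

lemma coe_mm {x} (hx : ∃ k, x k ≠ ⊤) : ((mm ha x : ℝ) : TT) = MM ha x := by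
  obtain ⟨v, hv⟩ := WithTop.ne_top_iff_exists.1 (MM_ne_top ha hx)
  rw [mm, ← hv, WithTop.untopD_coe]

lemma MM_shift (x) (c : ℝ) :
    MM ha (fun k => x k + ((c * a k : ℝ) : TT)) = addC c (MM ha x) := by
  rw [MM, MM, Finset.apply_inf'_eq_inf'_comp _ (addC c) (fun s t => (addC c).monotone.map_min)]
  congr 1
  funext k
  rw [Function.comp_apply, addC_eq, gIso_shift]

lemma mm_shift {x} (hx : ∃ k, x k ≠ ⊤) (c : ℝ) :
    mm ha (fun k => x k + ((c * a k : ℝ) : TT)) = mm ha x + c := by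
  have hx' : ∃ k, x k + ((c * a k : ℝ) : TT) ≠ ⊤ := by
    obtain ⟨k, hk⟩ := hx
    refine ⟨k, ?_⟩
    lift x k to ℝ using hk with u
    rw [← WithTop.coe_add]
    exact WithTop.coe_ne_top
  have := coe_mm ha hx'
  rw [MM_shift, addC_eq, ← coe_mm ha hx, ← WithTop.coe_add] at this
  exact_mod_cast this

def ww (x : Fin (e+1) → TT) : Fin (e+1) → ℝ :=
  fun k => Real.exp (mm ha x) * NN (gIso ha k (x k))

lemma NN_add_coe (t : TT) (c : ℝ) : NN (t + (c : TT)) = NN t * Real.exp (-c) := by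
  induction t using WithTop.recTopCoe with
  | top => simp [NN_top]
  | coe u => rw [← WithTop.coe_add, NN_coe, NN_coe, ← Real.exp_add]; ring_nf

lemma ww_shift {x} (hx : ∃ k, x k ≠ ⊤) (c : ℝ) :
    ww ha (fun k => x k + ((c * a k : ℝ) : TT)) = ww ha x := by
  funext k
  rw [ww, ww, mm_shift ha hx, gIso_shift, NN_add_coe, Real.exp_add]
  have h : Real.exp c * Real.exp (-c) = 1 := by rw [← Real.exp_add, add_neg_cancel, Real.exp_zero]
  linear_combination Real.exp (mm ha x) * NN (gIso ha k (x k)) * h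

lemma ww_nonneg (x) (k) : 0 ≤ ww ha x k :=
  mul_nonneg (Real.exp_nonneg _) (NN_nonneg _)

lemma ww_le_one {x} (hx : ∃ k, x k ≠ ⊤) (k) : ww ha x k ≤ 1 := by
  have h1 : NN (gIso ha k (x k)) ≤ NN (MM ha x) := NN_strictAnti.antitone (MM_le ha x k)
  have h2 : NN (MM ha x) = Real.exp (-(mm ha x)) := by rw [← coe_mm ha hx, NN_coe]
  calc ww ha x k ≤ Real.exp (mm ha x) * NN (MM ha x) := by
        exact mul_le_mul_of_nonneg_left h1 (Real.exp_nonneg _)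
    _ = 1 := by rw [h2, ← Real.exp_add]; simp

lemma ww_exists_one {x} (hx : ∃ k, x k ≠ ⊤) : ∃ k, ww ha x k = 1 := by
  obtain ⟨k, hk⟩ := exists_MM_eq ha x
  refine ⟨k, ?_⟩
  rw [ww, ← hk, ← coe_mm ha hx, NN_coe, ← Real.exp_add, add_neg_cancel, Real.exp_zero]

lemma recover {x x' : Fin (e+1) → TT} (hx : ∃ k, x k ≠ ⊤) (hx' : ∃ k, x' k ≠ ⊤) (c : ℝ)
    (hm : mm ha x' = mm ha x + c) (hw : ww ha x' = ww ha x) (k) :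
    x' k = x k + ((c * a k : ℝ) : TT) := by
  have h0 := congrFun hw k
  simp only [ww] at h0
  rw [hm, Real.exp_add, mul_assoc] at h0
  have h1' : Real.exp c * NN (gIso ha k (x' k)) = NN (gIso ha k (x k)) :=
    mul_left_cancel₀ (Real.exp_ne_zero _) h0
  have h1 : NN (gIso ha k (x' k)) = NN (gIso ha k (x k) + (c : TT)) := by
    rw [NN_add_coe, ← h1']
    have hc : Real.exp c * Real.exp (-c) = 1 := by
      rw [← Real.exp_add, add_neg_cancel, Real.exp_zero]
    linear_combination (-NN (gIso ha k (x' k))) * hc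
  have h2 : gIso ha k (x' k) = gIso ha k (x k) + (c : TT) := NN_inj h1
  have h3 : gIso ha k (x k) + (c : TT) = gIso ha k (x k + ((c * a k : ℝ) : TT)) :=
    (gIso_shift ha k _ c).symm
  rw [h3] at h2
  exact (gIso ha k).injective h2

def WW (e : ℕ) : Set (Fin (e+1) → ℝ) :=
  {w | (∀ k, 0 ≤ w k) ∧ (∀ k, w k ≤ 1) ∧ ∃ k, w k = 1}

def extv (u : EuclideanSpace ℝ (Fin e)) : Fin (e+1) → ℝ :=
  Fin.snoc (fun i => u i) (-(∑ i, u i))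

def QQ (e : ℕ) : Set (EuclideanSpace ℝ (Fin e)) :=
  {u | ∀ i j : Fin (e+1), extv u i - extv u j ≤ 1}

lemma extv_castSucc (u : EuclideanSpace ℝ (Fin e)) (i : Fin e) :
    extv u i.castSucc = u i := by simp [extv]

lemma extv_last (u : EuclideanSpace ℝ (Fin e)) :
    extv u (Fin.last e) = -(∑ i, u i) := by simp [extv]

lemma sum_extv (u : EuclideanSpace ℝ (Fin e)) : ∑ k, extv u k = 0 := by
  rw [Fin.sum_univ_castSucc]
  simp [extv_castSucc, extv_last]

lemma continuous_extv (k : Fin (e+1)) : Continuous (fun u : EuclideanSpace ℝ (Fin e) => extv u k) := by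
  induction k using Fin.lastCases with
  | last =>
    simp only [extv_last]
    exact (continuous_finset_sum _ fun i _ => (EuclideanSpace.proj i).continuous).neg
  | cast i =>
    simp only [extv_castSucc]
    exact (EuclideanSpace.proj i).continuous

lemma extv_comb (u v : EuclideanSpace ℝ (Fin e)) (α β : ℝ) (k : Fin (e+1)) :
    extv (α • u + β • v) k = α * extv u k + β * extv v k := by
  induction k using Fin.lastCases with
  | last =>
    simp only [extv_last, Finset.sum_add_distrib, ← Finset.mul_sum, PiLp.add_apply,
      PiLp.smul_apply, smul_eq_mul]
    ring
  | cast i =>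
    simp only [extv_castSucc, PiLp.add_apply, PiLp.smul_apply, smul_eq_mul]

lemma convex_QQ : Convex ℝ (QQ e) := by
  intro u hu v hv α β hα hβ hαβ i j
  have := hu i j
  have := hv i j
  rw [extv_comb, extv_comb]
  nlinarith

lemma isClosed_QQ : IsClosed (QQ e) := by
  have : QQ e = ⋂ (i : Fin (e+1)) (j : Fin (e+1)), {u | extv u i - extv u j ≤ 1} := by
    ext u; simp [QQ, mem_iInter]
  rw [this]
  exact isClosed_iInter fun i => isClosed_iInter fun j =>
    isClosed_le ((continuous_extv i).sub (continuous_extv j)) continuous_const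

lemma abs_extv_le_one {u : EuclideanSpace ℝ (Fin e)} (hu : u ∈ QQ e) (k : Fin (e+1)) :
    |extv u k| ≤ 1 := by
  rw [abs_le]
  constructor
  · have h := Finset.sum_le_sum (fun i (_ : i ∈ Finset.univ) => hu i k)
    simp only [Finset.sum_sub_distrib, sum_extv, Finset.sum_const, Finset.card_univ,
      Fintype.card_fin, nsmul_eq_mul, mul_one, zero_sub] at h
    have hpos : (0:ℝ) < ((e:ℝ)+1) := by positivity
    push_cast at h
    nlinarith
  · have h := Finset.sum_le_sum (fun j (_ : j ∈ Finset.univ) => hu k j)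
    simp only [Finset.sum_sub_distrib, sum_extv, Finset.sum_const, Finset.card_univ,
      Fintype.card_fin, nsmul_eq_mul, mul_one, sub_zero] at h
    have hpos : (0:ℝ) < ((e:ℝ)+1) := by positivity
    push_cast at h
    nlinarith

lemma isBounded_QQ : Bornology.IsBounded (QQ e) := by
  refine (Metric.isBounded_closedBall (x := (0 : EuclideanSpace ℝ (Fin e))) (r := (e+1 : ℝ))).subset ?_
  intro u hu
  rw [Metric.mem_closedBall, dist_zero_right, EuclideanSpace.norm_eq]
  have h1 : ∀ i : Fin e, ‖u i‖^2 ≤ 1 := by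
    intro i
    have := abs_extv_le_one hu i.castSucc
    rw [extv_castSucc] at this
    rw [Real.norm_eq_abs, sq_abs]
    nlinarith [abs_nonneg (u i), abs_le.1 this, sq_abs (u i)]
  have h2 : ∑ i, ‖u i‖^2 ≤ (e:ℝ) := by
    calc ∑ i, ‖u i‖^2 ≤ ∑ _i : Fin e, (1:ℝ) := Finset.sum_le_sum fun i _ => h1 i
      _ = (e:ℝ) := by simp
  have h3 : Real.sqrt (∑ i, ‖u i‖^2) ≤ Real.sqrt (e:ℝ) := Real.sqrt_le_sqrt h2
  refine h3.trans ?_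
  rw [show ((e:ℝ)+1) = ((e+1:ℕ):ℝ) by push_cast; ring]
  calc Real.sqrt (e:ℝ) ≤ (e:ℝ) + 1 := by
        nlinarith [Real.sq_sqrt (by positivity : (0:ℝ) ≤ (e:ℝ)), Real.sqrt_nonneg (e:ℝ)]
    _ = _ := by push_cast; ring

lemma abs_apply_le_norm (u : EuclideanSpace ℝ (Fin e)) (i : Fin e) : |u i| ≤ ‖u‖ := by
  rw [EuclideanSpace.norm_eq]
  have h : |u i|^2 ≤ ∑ j, ‖u j‖^2 := by
    have := Finset.single_le_sum (f := fun j => ‖u j‖^2) (fun j _ => by positivity) (Finset.mem_univ i)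
    simpa [Real.norm_eq_abs] using this
  nlinarith [Real.sqrt_sq (abs_nonneg (u i)), Real.sqrt_le_sqrt h, abs_nonneg (u i)]

lemma zero_mem_interior_QQ : (0 : EuclideanSpace ℝ (Fin e)) ∈ interior (QQ e) := by
  rw [mem_interior_iff_mem_nhds]
  refine Filter.mem_of_superset (Metric.ball_mem_nhds 0 (by positivity : (0:ℝ) < 1/(2*(e+1)))) ?_
  intro u hu
  rw [Metric.mem_ball, dist_zero_right] at hu
  have hnorm : ∀ k : Fin (e+1), |extv u k| ≤ (e+1) * ‖u‖ := by
    intro k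
    induction k using Fin.lastCases with
    | last =>
      rw [extv_last, abs_neg]
      calc |∑ i, u i| ≤ ∑ i, |u i| := Finset.abs_sum_le_sum_abs _ _
        _ ≤ ∑ _i : Fin e, ‖u‖ := Finset.sum_le_sum fun i _ => abs_apply_le_norm u i
        _ = e * ‖u‖ := by rw [Finset.sum_const, Finset.card_univ]; simp [nsmul_eq_mul]
        _ ≤ (e+1) * ‖u‖ := by nlinarith [norm_nonneg u]
    | cast i =>
      rw [extv_castSucc]
      calc |u i| ≤ ‖u‖ := abs_apply_le_norm u i
        _ = 1 * ‖u‖ := (one_mul _).symm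
        _ ≤ (e+1) * ‖u‖ := by nlinarith [norm_nonneg u]
  intro i j
  refine le_of_lt ?_
  have hi := (abs_le.1 (hnorm i)).2
  have hj := (abs_le.1 (hnorm j)).1
  have : (e:ℝ)+1 > 0 := by positivity
  calc extv u i - extv u j ≤ (e+1)*‖u‖ + (e+1)*‖u‖ := by linarith
    _ < 1 := by
        have h2 : ‖u‖ * (2*((e:ℝ)+1)) < 1 := by
          rw [← lt_div_iff₀ (by positivity : (0:ℝ) < 2*((e:ℝ)+1))]
          exact hu
        nlinarith [norm_nonneg u]

lemma nonempty_homeo_QQ_ball :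
    Nonempty (↥(QQ e) ≃ₜ ↥(Metric.closedBall (0 : EuclideanSpace ℝ (Fin e)) 1)) := by
  obtain ⟨h, -, h2, -⟩ := exists_homeomorph_image_eq (E := EuclideanSpace ℝ (Fin e))
    convex_QQ ⟨0, zero_mem_interior_QQ⟩ ((NormedSpace.isVonNBounded_iff ℝ).2 isBounded_QQ)
    (convex_closedBall 0 1) ⟨0, by
      rw [mem_interior_iff_mem_nhds]
      exact Filter.mem_of_superset (Metric.ball_mem_nhds 0 one_pos) Metric.ball_subset_closedBall⟩
    ((NormedSpace.isVonNBounded_iff ℝ).2 Metric.isBounded_closedBall)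
  rw [isClosed_QQ.closure_eq, Metric.isClosed_closedBall.closure_eq] at h2
  exact ⟨(h.image (QQ e)).trans (Homeomorph.setCongr h2)⟩


-- new part
def toQfun (w : Fin (e+1) → ℝ) : EuclideanSpace ℝ (Fin e) :=
  (EuclideanSpace.equiv (Fin e) ℝ).symm (fun i => w i.castSucc - (∑ k, w k)/(e+1))

lemma toQfun_apply (w : Fin (e+1) → ℝ) (i : Fin e) :
    toQfun w i = w i.castSucc - (∑ k, w k)/(e+1) := rfl

lemma extv_toQfun (w : Fin (e+1) → ℝ) :
    extv (toQfun w) = fun k => w k - (∑ k, w k)/(e+1) := by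
  funext k
  set S := ∑ k, w k with hS
  set s := S/(e+1 : ℝ) with hs
  have h3 : s * ((e:ℝ)+1) = S := by
    rw [hs]; field_simp
  induction k using Fin.lastCases with
  | last =>
    rw [extv_last]
    have h1 : ∑ i : Fin e, toQfun w i = (∑ i : Fin e, w i.castSucc) - e * s := by
      simp only [toQfun_apply, ← hS, ← hs, Finset.sum_sub_distrib, Finset.sum_const,
        Finset.card_univ, Fintype.card_fin, nsmul_eq_mul]
    have h2 : S = (∑ i : Fin e, w i.castSucc) + w (Fin.last e) := Fin.sum_univ_castSucc w
    rw [h1]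
    linarith
  | cast i =>
    rw [extv_castSucc, toQfun_apply]

lemma toQfun_mem {w : Fin (e+1) → ℝ} (hw : w ∈ WW e) : toQfun w ∈ QQ e := by
  intro i j
  rw [extv_toQfun]
  have h1 := hw.2.1 i
  have h2 := hw.1 j
  simp only
  linarith

def fromQfun (u : EuclideanSpace ℝ (Fin e)) : Fin (e+1) → ℝ :=
  fun k => extv u k + (1 - Finset.univ.sup' Finset.univ_nonempty (extv u))

lemma fromQfun_mem {u : EuclideanSpace ℝ (Fin e)} (hu : u ∈ QQ e) : fromQfun u ∈ WW e := by
  obtain ⟨i₀, -, hi₀⟩ := Finset.exists_mem_eq_sup' (Finset.univ_nonempty) (extv u)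
  refine ⟨fun k => ?_, fun k => ?_, ⟨i₀, ?_⟩⟩
  · have := hu i₀ k
    rw [fromQfun, hi₀]
    linarith
  · have := Finset.le_sup' (extv u) (Finset.mem_univ k)
    rw [fromQfun]
    linarith
  · rw [fromQfun, hi₀]
    ring

lemma fromQ_toQ {w : Fin (e+1) → ℝ} (hw : w ∈ WW e) : fromQfun (toQfun w) = w := by
  obtain ⟨k₁, hk₁⟩ := hw.2.2
  have hmax : Finset.univ.sup' Finset.univ_nonempty w = 1 := by
    refine le_antisymm (Finset.sup'_le _ _ fun k _ => hw.2.1 k) ?_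
    rw [← hk₁]
    exact Finset.le_sup' w (Finset.mem_univ k₁)
  set s := (∑ k, w k)/(e+1 : ℝ) with hs
  have hsup : Finset.univ.sup' Finset.univ_nonempty (extv (toQfun w)) = 1 - s := by
    rw [extv_toQfun, ← hs]
    have hmono : Monotone (fun t : ℝ => t - s) := fun x y hxy => by simpa using hxy
    have := Finset.comp_sup'_eq_sup'_comp (γ := ℝ) (Finset.univ_nonempty) (f := w)
      (fun t => t - s) (fun x y => hmono.map_max)
    rw [← hmax]
    exact this.symm
  funext k
  rw [fromQfun, hsup, extv_toQfun, ← hs]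
  ring

lemma toQ_fromQ {u : EuclideanSpace ℝ (Fin e)} (hu : u ∈ QQ e) : toQfun (fromQfun u) = u := by
  set t := 1 - Finset.univ.sup' Finset.univ_nonempty (extv u) with ht
  have hsum : ∑ k, fromQfun u k = ((e:ℝ)+1) * t := by
    simp only [fromQfun, ← ht, Finset.sum_add_distrib, sum_extv, Finset.sum_const,
      Finset.card_univ, Fintype.card_fin, nsmul_eq_mul, zero_add]
    push_cast; ring
  ext i
  rw [toQfun_apply, fromQfun, hsum, extv_castSucc]
  have : ((e:ℝ)+1) ≠ 0 := by positivity
  field_simp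
  linarith

def homeoWQ (e : ℕ) : ↥(WW e) ≃ₜ ↥(QQ e) where
  toFun w := ⟨toQfun w.1, toQfun_mem w.2⟩
  invFun u := ⟨fromQfun u.1, fromQfun_mem u.2⟩
  left_inv w := Subtype.ext (fromQ_toQ w.2)
  right_inv u := Subtype.ext (toQ_fromQ u.2)
  continuous_toFun := by
    refine Continuous.subtype_mk ?_ _
    refine ((EuclideanSpace.equiv (Fin e) ℝ).symm.continuous).comp ?_
    refine continuous_pi fun i => ?_
    exact ((continuous_apply i.castSucc).comp continuous_subtype_val).sub
      ((continuous_finset_sum _ fun k _ =>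
        (continuous_apply k).comp continuous_subtype_val).div_const _)
  continuous_invFun := by
    refine Continuous.subtype_mk ?_ _
    refine continuous_pi fun k => ?_
    have hext : ∀ j : Fin (e+1), Continuous (fun u : ↥(QQ e) => extv u.1 j) :=
      fun j => (continuous_extv j).comp continuous_subtype_val
    exact (hext k).add (continuous_const.sub (continuous_sup' Finset.univ_nonempty hext))


/-! ### Part 6: main construction -/

theorem mainAux {e : ℕ} (a : Fin (e+1) → ℝ) (ha : ∀ k, 0 < a k)
    (X : Set (Fin (e+1) → WithTop ℝ)) (hX : X = {x | x ≠ fun _ => ⊤})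
    (r : Setoid X)
    (hr : ∀ x y : X, r.r x y ↔ ∃ n : ℤ, ∀ k,
      (y : Fin (e+1) → WithTop ℝ) k = (x : Fin (e+1) → WithTop ℝ) k + (((n : ℝ) * a k : ℝ) : WithTop ℝ)) :
    Nonempty (Quotient r ≃ₜ
      Circle × (Metric.closedBall (0 : EuclideanSpace ℝ (Fin e)) 1)) := by
  classical
  have hXne : ∀ x : X, ∃ k, (x : Fin (e+1) → TT) k ≠ ⊤ := by
    rintro ⟨z, hz⟩
    rw [hX] at hz
    simpa [Function.ne_iff] using hz
  -- the map G
  set G : X → AddCircle (1:ℝ) × ↥(WW e) := fun x =>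
    (((mm ha (x : Fin (e+1) → TT) : ℝ) : AddCircle (1:ℝ)),
      ⟨ww ha (x : Fin (e+1) → TT),
        fun k => ww_nonneg ha _ k, fun k => ww_le_one ha (hXne x) k, ww_exists_one ha (hXne x)⟩)
    with hG
  -- invariance
  have hGinv : ∀ x y : X, r.r x y → G x = G y := by
    intro x y hxy
    obtain ⟨n, hn⟩ := (hr x y).1 hxy
    have hy : (y : Fin (e+1) → TT) =
        fun k => (x : Fin (e+1) → TT) k + (((n:ℝ) * a k : ℝ) : TT) := funext hn
    have h1 : mm ha (y : Fin (e+1) → TT) = mm ha (x : Fin (e+1) → TT) + (n:ℝ) := by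
      rw [hy]; exact mm_shift ha (hXne x) _
    have h2 : ww ha (y : Fin (e+1) → TT) = ww ha (x : Fin (e+1) → TT) := by
      rw [hy]; exact ww_shift ha (hXne x) _
    refine Prod.ext ?_ (Subtype.ext h2.symm)
    show ((mm ha (x : Fin (e+1) → TT) : ℝ) : AddCircle (1:ℝ)) = ((mm ha (y : Fin (e+1) → TT) : ℝ) : AddCircle (1:ℝ))
    rw [h1, QuotientAddGroup.eq_iff_sub_mem]
    exact AddSubgroup.mem_zmultiples_iff.2 ⟨-n, by rw [zsmul_eq_mul, mul_one]; push_cast; ring⟩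
  -- injectivity
  have hGinj : ∀ x y : X, G x = G y → r.r x y := by
    intro x y hxy
    have h1 : ((mm ha (x : Fin (e+1) → TT) : ℝ) : AddCircle (1:ℝ))
        = ((mm ha (y : Fin (e+1) → TT) : ℝ) : AddCircle (1:ℝ)) := congrArg Prod.fst hxy
    have h2 : ww ha (y : Fin (e+1) → TT) = ww ha (x : Fin (e+1) → TT) :=
      (congrArg (fun p : AddCircle (1:ℝ) × ↥(WW e) => (p.2 : Fin (e+1) → ℝ)) hxy).symm
    rw [QuotientAddGroup.eq_iff_sub_mem] at h1
    obtain ⟨n, hn⟩ := AddSubgroup.mem_zmultiples_iff.1 h1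
    have hn' : (n : ℝ) = mm ha (x : Fin (e+1) → TT) - mm ha (y : Fin (e+1) → TT) := by
      rw [← hn]; push_cast; simp
    have hmm : mm ha (y : Fin (e+1) → TT) = mm ha (x : Fin (e+1) → TT) + ((-n : ℤ) : ℝ) := by
      push_cast
      linarith [hn']
    exact (hr x y).2 ⟨-n, fun k => recover ha (hXne x) (hXne y) _ hmm h2 k⟩
  -- surjectivity
  have hGsurj : Function.Surjective G := by
    rintro ⟨c, w⟩
    obtain ⟨m₀, rfl⟩ := QuotientAddGroup.mk'_surjective (AddSubgroup.zmultiples (1:ℝ)) c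
    obtain ⟨hw0, hw1, k₁, hk₁⟩ := w.2
    set x : Fin (e+1) → TT := fun k => (gIso ha k).symm (NNinv (w.1 k * Real.exp (-m₀))) with hxdef
    have hgx : ∀ k, gIso ha k (x k) = NNinv (w.1 k * Real.exp (-m₀)) :=
      fun k => (gIso ha k).apply_symm_apply _
    have hcase : ∀ k, (w.1 k = 0 ∧ gIso ha k (x k) = ⊤) ∨
        (0 < w.1 k ∧ gIso ha k (x k) = ((m₀ - Real.log (w.1 k) : ℝ) : TT)) := by
      intro k
      rcases eq_or_lt_of_le (hw0 k) with h | h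
      · left
        refine ⟨h.symm, ?_⟩
        rw [hgx, ← h, zero_mul, NNinv_zero]
      · right
        refine ⟨h, ?_⟩
        rw [hgx]
        have harg : w.1 k * Real.exp (-m₀) = Real.exp (-(m₀ - Real.log (w.1 k))) := by
          conv_lhs => rw [← Real.exp_log h]
          rw [← Real.exp_add]
          congr 1
          ring
        rw [harg, NNinv_exp]
    have hge : ∀ k, ((m₀:ℝ) : TT) ≤ gIso ha k (x k) := by
      intro k
      rcases hcase k with ⟨_, h⟩ | ⟨hpos, h⟩
      · rw [h]; exact le_top
      · rw [h]
        exact WithTop.coe_le_coe.2 (by nlinarith [Real.log_nonpos (hw0 k) (hw1 k)])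
    have hMM : MM ha x = ((m₀:ℝ) : TT) := by
      refine le_antisymm ?_ (Finset.le_inf' _ _ fun k _ => hge k)
      rcases hcase k₁ with ⟨hz, -⟩ | ⟨-, h⟩
      · rw [hk₁] at hz; norm_num at hz
      · have hval : gIso ha k₁ (x k₁) = ((m₀:ℝ) : TT) := by
          rw [h, hk₁, Real.log_one, sub_zero]
        rw [← hval]
        exact MM_le ha x k₁
    have hxX : x ∈ X := by
      rw [hX]
      intro hcon
      have htop : MM ha x = ⊤ := by
        rw [show x = (fun _ => ⊤ : Fin (e+1) → TT) from hcon, MM]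
        simp only [gIso_top]
        rw [Finset.inf'_const]
      rw [hMM] at htop
      exact WithTop.coe_ne_top htop
    have hmm0 : mm ha x = m₀ := by rw [mm, hMM, WithTop.untopD_coe]
    have hww : ww ha x = w.1 := by
      funext k
      rw [ww, hmm0]
      rcases hcase k with ⟨hz, h⟩ | ⟨hpos, h⟩
      · rw [h, NN_top, mul_zero, hz]
      · rw [h, NN_coe]
        have : Real.exp m₀ * Real.exp (-(m₀ - Real.log (w.1 k))) = Real.exp (Real.log (w.1 k)) := by
          rw [← Real.exp_add]
          congr 1
          ring
        rw [this, Real.exp_log hpos]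
    refine ⟨⟨x, hxX⟩, Prod.ext ?_ (Subtype.ext ?_)⟩
    · show ((mm ha x : ℝ) : AddCircle (1:ℝ)) = _
      rw [hmm0]
      rfl
    · exact hww
  -- continuity
  have hcontg : ∀ k, Continuous fun x : X => gIso ha k ((x : Fin (e+1) → TT) k) := fun k =>
    ((gIso ha k).toHomeomorph.continuous).comp ((continuous_apply k).comp continuous_subtype_val)
  have hcontMM : Continuous fun x : X => MM ha (x : Fin (e+1) → TT) := by
    unfold MM
    exact continuous_inf' Finset.univ_nonempty hcontg
  have hcontmm : Continuous fun x : X => mm ha (x : Fin (e+1) → TT) := by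
    unfold mm
    exact continuous_untop'_comp hcontMM (fun x => MM_ne_top ha (hXne x))
  have hcontG : Continuous G := by
    rw [hG]
    refine Continuous.prodMk ?_ ?_
    · exact (AddCircle.continuous_mk' (1:ℝ)).comp hcontmm
    · refine Continuous.subtype_mk ?_ _
      refine continuous_pi fun k => ?_
      exact (Real.continuous_exp.comp hcontmm).mul (continuous_NN.comp (hcontg k))
  -- compactness of the quotient
  set K : Set (Fin (e+1) → TT) := {x | (∀ k, 0 ≤ x k) ∧ ∃ k, x k ≤ ((a k : ℝ) : TT)} with hK
  have hKcomp : IsCompact K := by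
    have hsub : K ⊆ Set.univ.pi (fun _ : Fin (e+1) => Icc (0:TT) ⊤) := by
      rintro x ⟨h0, -⟩ k -
      exact ⟨h0 k, le_top⟩
    have hclosed : IsClosed K := by
      have hKeq : K = (⋂ k, {x : Fin (e+1) → TT | 0 ≤ x k})
          ∩ (⋃ k, {x : Fin (e+1) → TT | x k ≤ ((a k : ℝ):TT)}) := by
        ext x
        simp [hK, mem_iInter, mem_iUnion]
      rw [hKeq]
      refine IsClosed.inter (isClosed_iInter fun k =>
        isClosed_le continuous_const (continuous_apply k)) ?_
      exact isClosed_iUnion_of_finite fun k => isClosed_le (continuous_apply k) continuous_const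
    exact IsCompact.of_isClosed_subset (isCompact_univ_pi fun _ => isCompact_Icc_top)
      hclosed hsub
  have hKrep : ∀ x : X, ∃ y : X, r.r x y ∧ (y : Fin (e+1) → TT) ∈ K := by
    intro x
    set n : ℤ := -⌊mm ha (x : Fin (e+1) → TT)⌋ with hn
    set y : Fin (e+1) → TT := fun k => (x : Fin (e+1) → TT) k + (((n:ℝ) * a k : ℝ) : TT) with hy
    have hyne : ∃ k, y k ≠ ⊤ := by
      obtain ⟨k, hk⟩ := hXne x
      refine ⟨k, ?_⟩
      obtain ⟨u, hu⟩ := WithTop.ne_top_iff_exists.1 hk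
      rw [hy]
      simp only
      rw [← hu, ← WithTop.coe_add]
      exact WithTop.coe_ne_top
    have hmy : mm ha y = Int.fract (mm ha (x : Fin (e+1) → TT)) := by
      rw [hy, mm_shift ha (hXne x), Int.fract, hn]
      push_cast
      ring
    have hyX : y ∈ X := by
      rw [hX]
      intro hcon
      obtain ⟨k, hk⟩ := hyne
      exact hk (by rw [hcon])
    have hMy : MM ha y = ((Int.fract (mm ha (x : Fin (e+1) → TT)) : ℝ) : TT) := by
      rw [← hmy]
      exact (coe_mm ha hyne).symm
    have h0 : ∀ k, (0:TT) ≤ y k := by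
      intro k
      have h3 : gIso ha k (0:TT) ≤ gIso ha k (y k) := by
        rw [gIso_zero]
        calc (0:TT) = ((0:ℝ):TT) := by norm_cast
          _ ≤ MM ha y := by
              rw [hMy]
              exact WithTop.coe_le_coe.2 (Int.fract_nonneg _)
          _ ≤ _ := MM_le ha y k
      exact (OrderIso.le_iff_le _).1 h3
    have hex : ∃ k, y k ≤ ((a k : ℝ) : TT) := by
      obtain ⟨k₀, hk₀⟩ := exists_MM_eq ha y
      refine ⟨k₀, ?_⟩
      have h4 : gIso ha k₀ (y k₀) ≤ gIso ha k₀ ((a k₀ : ℝ) : TT) := by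
        rw [gIso_coe, mul_inv_cancel₀ (ha k₀).ne', ← hk₀, hMy]
        exact WithTop.coe_le_coe.2 (le_of_lt (Int.fract_lt_one _))
      exact (OrderIso.le_iff_le _).1 h4
    exact ⟨⟨y, hyX⟩, (hr x ⟨y, hyX⟩).2 ⟨n, fun k => rfl⟩, ⟨h0, hex⟩⟩
  have hKX : ∀ z ∈ K, z ∈ X := by
    rintro z ⟨-, k, hk⟩
    rw [hX]
    intro hcon
    rw [hcon] at hk
    simp at hk
  haveI : CompactSpace (Quotient r) := by
    refine ⟨?_⟩
    have hK' : IsCompact {x : X | (x : Fin (e+1) → TT) ∈ K} := by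
      rw [Topology.IsEmbedding.subtypeVal.isCompact_iff]
      have himg : Subtype.val '' {x : X | (x : Fin (e+1) → TT) ∈ K} = K := by
        ext z
        simp only [mem_image, mem_setOf_eq, Subtype.exists, exists_and_right, exists_eq_right]
        exact ⟨fun ⟨_, hz⟩ => hz, fun hz => ⟨hKX z hz, hz⟩⟩
      rw [himg]
      exact hKcomp
    have huniv : (Set.univ : Set (Quotient r))
        = Quotient.mk r '' {x : X | (x : Fin (e+1) → TT) ∈ K} := by
      refine Set.eq_of_subset_of_subset ?_ (subset_univ _)
      intro q _
      obtain ⟨x, rfl⟩ := Quotient.exists_rep q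
      obtain ⟨y, hxy, hyK⟩ := hKrep x
      exact ⟨y, hyK, (Quotient.sound hxy).symm⟩
    rw [huniv]
    exact hK'.image continuous_quotient_mk'
  -- assemble
  set F : Quotient r → AddCircle (1:ℝ) × ↥(WW e) := Quotient.lift G hGinv with hF
  have hFcont : Continuous F := hcontG.quotient_lift hGinv
  have hFbij : Function.Bijective F := by
    constructor
    · intro q₁ q₂ h
      induction q₁ using Quotient.ind
      induction q₂ using Quotient.ind
      exact Quotient.sound (hGinj _ _ h)
    · intro z
      obtain ⟨x, hx⟩ := hGsurj z
      exact ⟨Quotient.mk r x, hx⟩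
  let h1 : Quotient r ≃ₜ AddCircle (1:ℝ) × ↥(WW e) :=
    Continuous.homeoOfEquivCompactToT2 (f := Equiv.ofBijective F hFbij) hFcont
  obtain ⟨hQB⟩ := nonempty_homeo_QQ_ball (e := e)
  exact ⟨h1.trans ((AddCircle.homeomorphCircle one_ne_zero).prodCongr
    ((homeoWQ e).trans hQB))⟩

end
end HopfAux

/-- For `d ≥ 1` and a vector `a ∈ ℝ^d` with strictly positive coordinates,
the diagonal tropical Hopf manifold `S = (𝕋^d ∖ {∞})/ℤ`, the quotient of `X = 𝕋^d ∖ {∞}` by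
the ℤ-action `n·x = x + n·a`, is homeomorphic to `S¹ × D^{d−1}`, the product of the circle
with the closed `(d−1)`-dimensional Euclidean ball. -/
theorem diagonal_hopf_homeo_circle_ball {d : ℕ} (hd : 1 ≤ d)
    (a : Fin d → ℝ) (ha : ∀ k, 0 < a k)
    (X : Set (Fin d → WithTop ℝ)) (hX : X = {x | x ≠ fun _ => ⊤})
    (r : Setoid X)
    (hr : ∀ x y : X, r.r x y ↔ ∃ n : ℤ, ∀ k,
      (y : Fin d → WithTop ℝ) k = (x : Fin d → WithTop ℝ) k + (((n : ℝ) * a k : ℝ) : WithTop ℝ)) :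
    Nonempty (Quotient r ≃ₜ
      Circle × (Metric.closedBall (0 : EuclideanSpace ℝ (Fin (d - 1))) 1)) := by
  obtain ⟨e, rfl⟩ : ∃ e, d = e + 1 := ⟨d - 1, by omega⟩
  exact HopfAux.mainAux a ha X hX r hr
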